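/- Suppose α(s) → 0 and β(s) → c as s → +∞, where (α, β) solves α' = -α² + (1/(4n²))(β-c)((2n-1)β+c), β' = -2nβα on [s₀, ∞), with α > 0 and β > c throughout. Then the second derivative bound dα'/ds ≤ 2α³ - c²α holds for all s, i.e., α''(s) ≤ 2α(s)³ - c²α(s). -/

import Mathlib

theorem stmt_16 (n : ℕ) (hn : 1 ≤ n) (c : ℝ) (hc : 0 < c) (s₀ : ℝ)
    (α β : ℝ → ℝ)
    (hα : ∀ s : ℝ, s₀ ≤ s → HasDerivAt α
      (-α s ^ 2 + (1 / (4 * (n : ℝ) ^ 2)) * (β s - c) * ((2 * n - 1) * β s + c)) s)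
    (hβ : ∀ s : ℝ, s₀ ≤ s → HasDerivAt β (-2 * n * β s * α s) s)
    (hα2 : ∀ s : ℝ, s₀ ≤ s → DifferentiableAt ℝ (deriv α) s)
    (hαpos : ∀ s : ℝ, s₀ ≤ s → 0 < α s)
    (hβc : ∀ s : ℝ, s₀ ≤ s → c < β s)
    (hαlim : Filter.Tendsto α Filter.atTop (nhds 0))
    (hβlim : Filter.Tendsto β Filter.atTop (nhds c)) :
    ∀ s : ℝ, s₀ ≤ s → deriv (deriv α) s ≤ 2 * α s ^ 3 - c ^ 2 * α s := by
  intro s hs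
  set m : ℝ := (n : ℝ) with hm
  have hm1 : (1:ℝ) ≤ m := by rw [hm]; exact_mod_cast hn
  have hm0 : (0:ℝ) < m := lt_of_lt_of_le one_pos hm1
  set A := α s with hA
  set B := β s with hB
  set A' : ℝ := -A ^ 2 + (1 / (4 * m ^ 2)) * (B - c) * ((2 * m - 1) * B + c) with hA'
  set B' : ℝ := -2 * m * B * A with hB'
  have ha : HasDerivAt α A' s := hα s hs
  have hb : HasDerivAt β B' s := hβ s hs
  -- derivative of the RHS g
  have h1 : HasDerivAt (fun t => α t ^ 2) (2 * A ^ 1 * A') s := by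
    simpa using ha.fun_pow 2
  have h2 : HasDerivAt (fun t => β t - c) B' s := hb.sub_const c
  have h3 : HasDerivAt (fun t => (2 * m - 1) * β t + c) ((2 * m - 1) * B') s :=
    (hb.const_mul (2 * m - 1)).add_const c
  have h4 : HasDerivAt (fun t => (β t - c) * ((2 * m - 1) * β t + c))
      (B' * ((2 * m - 1) * B + c) + (B - c) * ((2 * m - 1) * B')) s := h2.mul h3
  have h5 : HasDerivAt (fun t => (1 / (4 * m ^ 2)) * ((β t - c) * ((2 * m - 1) * β t + c)))
      ((1 / (4 * m ^ 2)) * (B' * ((2 * m - 1) * B + c) + (B - c) * ((2 * m - 1) * B'))) s :=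
    h4.const_mul _
  set D : ℝ := -(2 * A ^ 1 * A') + (1 / (4 * m ^ 2)) * (B' * ((2 * m - 1) * B + c) + (B - c) * ((2 * m - 1) * B')) with hD
  have hg : HasDerivAt (fun t => -α t ^ 2 + (1 / (4 * m ^ 2)) * ((β t - c) * ((2 * m - 1) * β t + c))) D s :=
    h1.neg.add h5
  have hgW := hg.hasDerivWithinAt (s := Set.Ici s₀)
  have hdd : HasDerivAt (deriv α) (deriv (deriv α) s) s := (hα2 s hs).hasDerivAt
  have hddW := hdd.hasDerivWithinAt (s := Set.Ici s₀)
  have hgW' : HasDerivWithinAt (fun t => -α t ^ 2 + (1 / (4 * m ^ 2)) * ((β t - c) * ((2 * m - 1) * β t + c)))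
      (deriv (deriv α) s) (Set.Ici s₀) s := by
    apply hddW.congr
    · intro t ht
      have := (hα t ht).deriv
      rw [this]; ring
    · have := (hα s hs).deriv
      rw [this]; ring
  have hud : UniqueDiffWithinAt ℝ (Set.Ici s₀) s := uniqueDiffOn_Ici s₀ s hs
  have heq : deriv (deriv α) s = D := by
    have e1 := hgW'.derivWithin hud
    have e2 := hgW.derivWithin hud
    rw [← e1, ← e2]
  rw [heq]
  have hApos : 0 < A := hαpos s hs
  have hBc : c < B := hβc s hs
  have hDval : D = 2 * A ^ 3 - c ^ 2 * A
      - (A / (2 * m ^ 2)) * ((B - c) * ((4 * m ^ 2 - 1) * B + (2 * m ^ 2 + 1) * c)) := by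
    rw [hD, hA', hB']
    field_simp
    ring
  rw [hDval]
  have hnonneg : 0 ≤ (A / (2 * m ^ 2)) * ((B - c) * ((4 * m ^ 2 - 1) * B + (2 * m ^ 2 + 1) * c)) := by
    apply mul_nonneg
    · positivity
    · apply mul_nonneg (by linarith)
      nlinarith [mul_pos (show (0:ℝ) < 4 * m ^ 2 - 1 by nlinarith) (hc.trans hBc), mul_pos (show (0:ℝ) < 2 * m ^ 2 + 1 by nlinarith) hc]
  linarith
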